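/- If g : ℝ → ℝⁿ is ACG* on an interval I, then g is differentiable at almost every point of I. -/

import Mathlib

open Set MeasureTheory Filter Matrix
open scoped Topology ENNReal NNReal
set_option maxHeartbeats 1000000

noncomputable def osc {n : ℕ} (g : ℝ → (Fin n → ℝ)) (s : Set ℝ) : ℝ :=
  sSup ((fun p : ℝ × ℝ => ‖g p.1 - g p.2‖) '' (s ×ˢ s))

def NonOverlapping {m : ℕ} (a b : Fin m → ℝ) : Prop :=
  ∀ i j, i ≠ j → b i ≤ a j ∨ b j ≤ a i


def ACOn {n : ℕ} (g : ℝ → (Fin n → ℝ)) (I : Set ℝ) : Prop :=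
  ∀ ε > (0:ℝ), ∃ δ > (0:ℝ), ∀ (m : ℕ) (a b : Fin m → ℝ),
    (∀ i, a i ≤ b i ∧ Set.Icc (a i) (b i) ⊆ I) → NonOverlapping a b →
    (∑ i, (b i - a i)) < δ → (∑ i, ‖g (b i) - g (a i)‖) < ε

def ACStarOn {n : ℕ} (g : ℝ → (Fin n → ℝ)) (S : Set ℝ) : Prop :=
  ∀ ε > (0:ℝ), ∃ δ > (0:ℝ), ∀ (m : ℕ) (a b : Fin m → ℝ),
    (∀ i, a i ≤ b i ∧ a i ∈ S ∧ b i ∈ S) → NonOverlapping a b →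
    (∑ i, (b i - a i)) < δ → (∑ i, osc g (Set.Icc (a i) (b i))) < ε

def ACGStarOn {n : ℕ} (g : ℝ → (Fin n → ℝ)) (S : Set ℝ) : Prop :=
  ContinuousOn g S ∧ ∃ f : ℕ → Set ℝ, S = ⋃ j, f j ∧ ∀ j, ACStarOn g (f j)

def LACOn {n : ℕ} (g : ℝ → (Fin n → ℝ)) (I : Set ℝ) : Prop :=
  ∀ a b : ℝ, a ≤ b → Set.Icc a b ⊆ I → ACOn g (Set.Icc a b)

section OscLemmas

variable {n : ℕ} {g : ℝ → (Fin n → ℝ)}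

lemma osc_nonneg (s : Set ℝ) : 0 ≤ osc g s :=
  Real.sSup_nonneg (by rintro x ⟨p, _, rfl⟩; positivity)

lemma osc_le {s : Set ℝ} {r : ℝ} (hr : 0 ≤ r)
    (h : ∀ p ∈ s, ∀ q ∈ s, ‖g p - g q‖ ≤ r) : osc g s ≤ r :=
  Real.sSup_le (by rintro x ⟨⟨p, q⟩, ⟨hp, hq⟩, rfl⟩; exact h p hp q hq) hr

lemma bddAbove_oscSet {a b : ℝ} (hg : ContinuousOn g (Icc a b)) :
    BddAbove ((fun p : ℝ × ℝ => ‖g p.1 - g p.2‖) '' (Icc a b ×ˢ Icc a b)) := by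
  have hcomp : IsCompact ((Icc a b) ×ˢ (Icc a b) : Set (ℝ × ℝ)) :=
    isCompact_Icc.prod isCompact_Icc
  have hcont : ContinuousOn (fun p : ℝ × ℝ => ‖g p.1 - g p.2‖) (Icc a b ×ˢ Icc a b) := by
    apply ContinuousOn.norm
    exact (hg.comp continuous_fst.continuousOn (fun p hp => hp.1)).sub
      (hg.comp continuous_snd.continuousOn (fun p hp => hp.2))
  exact (hcomp.image_of_continuousOn hcont).bddAbove

lemma norm_sub_le_osc {a b p q : ℝ} (hg : ContinuousOn g (Icc a b))
    (hp : p ∈ Icc a b) (hq : q ∈ Icc a b) : ‖g p - g q‖ ≤ osc g (Icc a b) :=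
  le_csSup (bddAbove_oscSet hg) ⟨(p, q), ⟨hp, hq⟩, rfl⟩

end OscLemmas

section Grouping

variable {n : ℕ} {g : ℝ → (Fin n → ℝ)} {E : Set ℝ}

/-- Sum of lengths of nonoverlapping intervals inside `[A, B]` is at most `B - A`. -/
lemma lenSum {m : ℕ} (a b : Fin m → ℝ) (S : Finset (Fin m)) (hab : ∀ i, a i ≤ b i)
    (hno : NonOverlapping a b) {A B : ℝ} (hAB : A ≤ B)
    (h : ∀ i ∈ S, A ≤ a i ∧ b i ≤ B) : ∑ i ∈ S, (b i - a i) ≤ B - A := by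
  have h1 : ENNReal.ofReal (∑ i ∈ S, (b i - a i)) = ∑ i ∈ S, ENNReal.ofReal (b i - a i) :=
    ENNReal.ofReal_sum_of_nonneg (fun i _ => sub_nonneg.2 (hab i))
  have h2 : ∑ i ∈ S, ENNReal.ofReal (b i - a i) = volume (⋃ i ∈ S, Ioc (a i) (b i)) := by
    rw [measure_biUnion_finset]
    · simp [Real.volume_Ioc]
    · intro i _ j _ hij
      rcases hno i j hij with h' | h'
      · intro u hu1 hu2 z hz
        have h3 := hu1 hz
        have h4 := hu2 hz
        simp only [mem_Ioc] at h3 h4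
        exact absurd (lt_of_le_of_lt (h3.2.trans h') h4.1) (lt_irrefl z)
      · intro u hu1 hu2 z hz
        have h3 := hu1 hz
        have h4 := hu2 hz
        simp only [mem_Ioc] at h3 h4
        exact absurd (lt_of_le_of_lt (h4.2.trans h') h3.1) (lt_irrefl z)
    · exact fun i _ => measurableSet_Ioc
  have h3 : volume (⋃ i ∈ S, Ioc (a i) (b i)) ≤ volume (Ioc A B) := by
    apply measure_mono
    refine iUnion₂_subset fun i hi => ?_
    intro z hz
    exact ⟨lt_of_le_of_lt (h i hi).1 hz.1, hz.2.trans (h i hi).2⟩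
  rw [Real.volume_Ioc] at h3
  have := h1 ▸ (h2 ▸ h3)
  exact (ENNReal.ofReal_le_ofReal_iff (sub_nonneg.2 hAB)).1 this

/-- Apply the AC* property to a sub-family indexed by a finset. -/
lemma subAC {δ : ℝ}
    (hACδ : ∀ (m : ℕ) (a b : Fin m → ℝ),
      (∀ i, a i ≤ b i ∧ a i ∈ E ∧ b i ∈ E) → NonOverlapping a b →
      (∑ i, (b i - a i)) < δ → (∑ i, osc g (Set.Icc (a i) (b i))) < 1)
    {m : ℕ} (a b : Fin m → ℝ) (S : Finset (Fin m))
    (hab : ∀ i, a i ≤ b i ∧ a i ∈ E ∧ b i ∈ E) (hno : NonOverlapping a b)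
    (hlen : ∑ i ∈ S, (b i - a i) < δ) :
    ∑ i ∈ S, osc g (Icc (a i) (b i)) < 1 := by
  classical
  set e := S.equivFin with he
  have hsum : ∀ F : Fin m → ℝ, (∑ k : Fin S.card, F ((e.symm k : Fin m))) = ∑ i ∈ S, F i := by
    intro F
    rw [Equiv.sum_comp e.symm (fun s : S => F (s : Fin m))]
    exact Finset.sum_coe_sort S F
  have := hACδ S.card (fun k => a (e.symm k)) (fun k => b (e.symm k))
    (fun k => hab _)
    (fun k l hkl => hno _ _ (fun hc => hkl (e.symm.injective (Subtype.ext hc))))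
    (by rw [hsum (fun i => b i - a i)]; exact hlen)
  rwa [hsum (fun i => osc g (Icc (a i) (b i)))] at this

/-- Grid bound: a uniform bound for sums of oscillations over short nonoverlapping families. -/
lemma gridBound (N : ℕ) (hEN : E ⊆ Icc (-(N : ℝ)) N) {δ : ℝ} (hδ : 0 < δ)
    (hACδ : ∀ (m : ℕ) (a b : Fin m → ℝ),
      (∀ i, a i ≤ b i ∧ a i ∈ E ∧ b i ∈ E) → NonOverlapping a b →
      (∑ i, (b i - a i)) < δ → (∑ i, osc g (Set.Icc (a i) (b i))) < 1)
    {m : ℕ} (a b : Fin m → ℝ)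
    (hab : ∀ i, a i ≤ b i ∧ a i ∈ E ∧ b i ∈ E ∧ b i - a i ≤ δ / 4)
    (hno : NonOverlapping a b) :
    ∑ i, osc g (Icc (a i) (b i)) ≤ (⌈16 * (N : ℝ) / δ⌉₊ + 1 : ℝ) := by
  classical
  set K := ⌈16 * (N : ℝ) / δ⌉₊ with hK
  set key : Fin m → ℕ := fun i => ⌊(a i + N) / (δ / 8)⌋₊ with hkey
  have hδ8 : (0:ℝ) < δ / 8 := by linarith
  have haN : ∀ i, 0 ≤ a i + N := by
    intro i
    have := (hEN (hab i).2.1).1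
    linarith
  have hmaps : ∀ i, key i ∈ Finset.range (K + 1) := by
    intro i
    have h1 : (a i + N) / (δ / 8) ≤ 16 * (N : ℝ) / δ := by
      have := (hEN (hab i).2.1).2
      rw [div_le_div_iff₀ hδ8 hδ]
      ring_nf
      nlinarith
    have h2 : key i ≤ K := by
      calc key i ≤ ⌊16 * (N : ℝ) / δ⌋₊ := Nat.floor_le_floor h1
        _ ≤ K := Nat.floor_le_ceil _
    exact Finset.mem_range.2 (Nat.lt_succ_of_le h2)
  have hfib := Finset.sum_fiberwise_of_maps_to (s := (Finset.univ : Finset (Fin m)))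
    (t := Finset.range (K + 1)) (g := key) (fun i _ => hmaps i)
    (fun i => osc g (Icc (a i) (b i)))
  rw [← hfib]
  have hbound : ∀ k ∈ Finset.range (K + 1),
      (∑ i ∈ Finset.univ.filter (fun i => key i = k), osc g (Icc (a i) (b i))) ≤ 1 := by
    intro k _
    apply le_of_lt
    apply subAC hACδ a b _ (fun i => ⟨(hab i).1, (hab i).2.1, (hab i).2.2.1⟩) hno
    have hlen : ∑ i ∈ Finset.univ.filter (fun i => key i = k), (b i - a i)
        ≤ ((k : ℝ) * (δ / 8) - N + 3 * (δ / 8)) - ((k : ℝ) * (δ / 8) - N) := by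
      apply lenSum a b _ (fun i => (hab i).1) hno (by linarith)
      intro i hi
      have hk : key i = k := by simpa using (Finset.mem_filter.1 hi).2
      have hlow : (k : ℝ) ≤ (a i + N) / (δ / 8) := by
        rw [← hk]
        exact Nat.floor_le (div_nonneg (haN i) hδ8.le)
      have hhigh : (a i + N) / (δ / 8) < (k : ℝ) + 1 := by
        rw [← hk]
        exact Nat.lt_floor_add_one _
      have hlow' : (k : ℝ) * (δ / 8) ≤ a i + N := by
        rwa [← le_div_iff₀ hδ8]
      have hhigh' : a i + N < ((k : ℝ) + 1) * (δ / 8) := by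
        rwa [← div_lt_iff₀ hδ8]
      constructor
      · linarith
      · have := (hab i).2.2.2
        nlinarith
    calc ∑ i ∈ Finset.univ.filter (fun i => key i = k), (b i - a i)
        ≤ 3 * (δ / 8) := by linarith
      _ < δ := by linarith
  calc (∑ k ∈ Finset.range (K + 1), ∑ i ∈ Finset.univ.filter (fun i => key i = k),
        osc g (Icc (a i) (b i))) ≤ ∑ k ∈ Finset.range (K + 1), (1:ℝ) :=
        Finset.sum_le_sum hbound
    _ = (K + 1 : ℝ) := by simp
section PhiSection

variable {n : ℕ}

/-- The set of achievable oscillation sums for short nonoverlapping families with right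
endpoints at most `t`. -/
def oscA (g : ℝ → (Fin n → ℝ)) (E : Set ℝ) (δ t : ℝ) : Set ℝ :=
  {x | ∃ (m : ℕ) (a b : Fin m → ℝ),
    (∀ i, a i ≤ b i ∧ a i ∈ E ∧ b i ∈ E ∧ b i ≤ t ∧ b i - a i ≤ δ / 4) ∧
    NonOverlapping a b ∧ x = ∑ i, osc g (Icc (a i) (b i))}

noncomputable def Phi (g : ℝ → (Fin n → ℝ)) (E : Set ℝ) (δ : ℝ) (t : ℝ) : ℝ :=
  sSup (oscA g E δ t)

variable {g : ℝ → (Fin n → ℝ)} {E : Set ℝ} {δ : ℝ}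

lemma zero_mem_oscA (t : ℝ) : (0:ℝ) ∈ oscA g E δ t :=
  ⟨0, (fun i => i.elim0), (fun i => i.elim0), fun i => i.elim0, fun i j _ => i.elim0, by simp⟩

lemma oscA_mono {s t : ℝ} (hst : s ≤ t) : oscA g E δ s ⊆ oscA g E δ t := by
  rintro x ⟨m, a, b, hfam, hno, rfl⟩
  exact ⟨m, a, b, fun i => ⟨(hfam i).1, (hfam i).2.1, (hfam i).2.2.1,
    (hfam i).2.2.2.1.trans hst, (hfam i).2.2.2.2⟩, hno, rfl⟩

variable {C : ℝ} (hC : ∀ t : ℝ, ∀ x ∈ oscA g E δ t, x ≤ C)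

include hC

lemma bddAbove_oscA (t : ℝ) : BddAbove (oscA g E δ t) := ⟨C, fun x hx => hC t x hx⟩

lemma Phi_mono : Monotone (Phi g E δ) := by
  intro s t hst
  exact csSup_le_csSup (bddAbove_oscA hC t) ⟨0, zero_mem_oscA s⟩ (oscA_mono hst)

lemma Phi_nonneg (t : ℝ) : 0 ≤ Phi g E δ t :=
  le_csSup (bddAbove_oscA hC t) (zero_mem_oscA t)

lemma Phi_le (t : ℝ) : Phi g E δ t ≤ C :=
  csSup_le ⟨0, zero_mem_oscA t⟩ (hC t)

lemma osc_le_Phi_sub {p q : ℝ} (hp : p ∈ E) (hq : q ∈ E) (hpq : p ≤ q)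
    (hlen : q - p ≤ δ / 4) : osc g (Icc p q) ≤ Phi g E δ q - Phi g E δ p := by
  have hPhiq : Phi g E δ q = sSup (oscA g E δ q) := rfl
  have key : ∀ x ∈ oscA g E δ p, x ≤ Phi g E δ q - osc g (Icc p q) := by
    rintro x ⟨m, a, b, hfam, hno, rfl⟩
    have hmem : (∑ i, osc g (Icc (a i) (b i))) + osc g (Icc p q) ∈ oscA g E δ q := by
      refine ⟨m + 1, Fin.snoc a p, Fin.snoc b q, ?_, ?_, ?_⟩
      · intro i
        refine Fin.lastCases ?_ ?_ i
        · simp only [Fin.snoc_last]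
          exact ⟨hpq, hp, hq, le_refl q, hlen⟩
        · intro j
          simp only [Fin.snoc_castSucc]
          exact ⟨(hfam j).1, (hfam j).2.1, (hfam j).2.2.1,
            (hfam j).2.2.2.1.trans hpq, (hfam j).2.2.2.2⟩
      · intro i j hij
        rcases Fin.eq_castSucc_or_eq_last i with ⟨i', rfl⟩ | rfl <;>
          rcases Fin.eq_castSucc_or_eq_last j with ⟨j', rfl⟩ | rfl
        · have hij' : i' ≠ j' := fun hc => hij (by rw [hc])
          simpa only [Fin.snoc_castSucc] using hno i' j' hij'
        · left
          simp only [Fin.snoc_castSucc, Fin.snoc_last]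
          exact (hfam i').2.2.2.1
        · right
          simp only [Fin.snoc_castSucc, Fin.snoc_last]
          exact (hfam j').2.2.2.1
        · exact absurd rfl hij
      · rw [Fin.sum_univ_castSucc]
        simp only [Fin.snoc_castSucc, Fin.snoc_last]
    have := le_csSup (bddAbove_oscA hC q) hmem
    linarith [hPhiq]
  have h1 : Phi g E δ p ≤ Phi g E δ q - osc g (Icc p q) :=
    csSup_le ⟨0, zero_mem_oscA p⟩ key
  linarith

end PhiSection
section BVSection

lemma evar_bounded {n : ℕ} {g : ℝ → (Fin n → ℝ)} {E : Set ℝ} {δ C M : ℝ} (N : ℕ)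
    (hEN : E ⊆ Icc (-(N : ℝ)) N) (hδ : 0 < δ)
    (φ : ℝ → ℝ) (hφm : Monotone φ) (hφ0 : ∀ t, 0 ≤ φ t) (hφC : ∀ t, φ t ≤ C)
    (hshort : ∀ p ∈ E, ∀ q ∈ E, p ≤ q → q - p ≤ δ / 4 → ‖g q - g p‖ ≤ φ q - φ p)
    (hM : ∀ p ∈ E, ‖g p‖ ≤ M) : BoundedVariationOn g E := by
  classical
  have hbound : eVariationOn g E ≤
      ENNReal.ofReal C + ENNReal.ofReal (8 * N / δ) * ENNReal.ofReal (2 * M) := by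
    unfold eVariationOn
    apply iSup_le
    rintro ⟨m, u, hu, us⟩
    simp only
    set T := Finset.range m with hT
    have hedist : ∀ i : ℕ, edist (g (u (i + 1))) (g (u i))
        = ENNReal.ofReal ‖g (u (i + 1)) - g (u i)‖ := by
      intro i
      rw [edist_dist, dist_eq_norm]
    have hsplit := Finset.sum_filter_add_sum_filter_not T (fun i => u (i + 1) - u i ≤ δ / 4)
      (fun i => edist (g (u (i + 1))) (g (u i)))
    rw [← hsplit]
    have hΔ0 : ∀ i : ℕ, 0 ≤ φ (u (i + 1)) - φ (u i) := by
      intro i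
      exact sub_nonneg.2 (hφm (hu (Nat.le_succ i)))
    have hA : (∑ i ∈ T.filter (fun i => u (i + 1) - u i ≤ δ / 4), edist (g (u (i + 1))) (g (u i))) ≤ ENNReal.ofReal C := by
      have h1 : ∀ i ∈ T.filter (fun i => u (i + 1) - u i ≤ δ / 4), edist (g (u (i + 1))) (g (u i))
          ≤ ENNReal.ofReal (φ (u (i + 1)) - φ (u i)) := by
        intro i hi
        rw [hedist i]
        apply ENNReal.ofReal_le_ofReal
        exact hshort (u i) (us i) (u (i + 1)) (us (i + 1)) (hu (Nat.le_succ i))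
          (by simpa using (Finset.mem_filter.1 hi).2)
      calc (∑ i ∈ T.filter (fun i => u (i + 1) - u i ≤ δ / 4), edist (g (u (i + 1))) (g (u i)))
          ≤ ∑ i ∈ T.filter (fun i => u (i + 1) - u i ≤ δ / 4), ENNReal.ofReal (φ (u (i + 1)) - φ (u i)) :=
            Finset.sum_le_sum h1
        _ = ENNReal.ofReal (∑ i ∈ T.filter (fun i => u (i + 1) - u i ≤ δ / 4), (φ (u (i + 1)) - φ (u i))) :=
            (ENNReal.ofReal_sum_of_nonneg (fun i _ => hΔ0 i)).symm
        _ ≤ ENNReal.ofReal C := by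
            apply ENNReal.ofReal_le_ofReal
            have h2 : (∑ i ∈ T.filter (fun i => u (i + 1) - u i ≤ δ / 4), (φ (u (i + 1)) - φ (u i)))
                ≤ ∑ i ∈ T, (φ (u (i + 1)) - φ (u i)) :=
              Finset.sum_le_sum_of_subset_of_nonneg (Finset.filter_subset _ _)
                (fun i _ _ => hΔ0 i)
            have h3 : (∑ i ∈ T, (φ (u (i + 1)) - φ (u i))) = φ (u m) - φ (u 0) :=
              Finset.sum_range_sub (fun i => φ (u i)) m
            have := hφC (u m)
            have := hφ0 (u 0)
            linarith
    have hB : (∑ i ∈ T.filter (fun i => ¬ (u (i + 1) - u i ≤ δ / 4)), edist (g (u (i + 1))) (g (u i)))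
        ≤ ENNReal.ofReal (8 * N / δ) * ENNReal.ofReal (2 * M) := by
      set T' := T.filter (fun i => ¬ (u (i + 1) - u i ≤ δ / 4)) with hT'
      have hterm : ∀ i ∈ T', edist (g (u (i + 1))) (g (u i)) ≤ ENNReal.ofReal (2 * M) := by
        intro i _
        rw [hedist i]
        apply ENNReal.ofReal_le_ofReal
        have h1 := hM _ (us (i + 1))
        have h2 := hM _ (us i)
        calc ‖g (u (i + 1)) - g (u i)‖ ≤ ‖g (u (i + 1))‖ + ‖g (u i)‖ := norm_sub_le _ _
          _ ≤ 2 * M := by linarith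
      have hcard : (T'.card : ℝ) ≤ 8 * N / δ := by
        have h1 : (T'.card : ℝ) * (δ / 4) ≤ ∑ i ∈ T', (u (i + 1) - u i) := by
          have := Finset.card_nsmul_le_sum T' (fun i => u (i + 1) - u i) (δ / 4)
            (fun i hi => le_of_lt (not_le.1 (by simpa using (Finset.mem_filter.1 hi).2)))
          simpa [nsmul_eq_mul, mul_comm] using this
        have h2 : (∑ i ∈ T', (u (i + 1) - u i)) ≤ ∑ i ∈ T, (u (i + 1) - u i) :=
          Finset.sum_le_sum_of_subset_of_nonneg (Finset.filter_subset _ _)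
            (fun i _ _ => sub_nonneg.2 (hu (Nat.le_succ i)))
        have h3 : (∑ i ∈ T, (u (i + 1) - u i)) = u m - u 0 :=
          Finset.sum_range_sub (fun i => u i) m
        have h4 : u m ≤ N := (hEN (us m)).2
        have h5 : -(N:ℝ) ≤ u 0 := (hEN (us 0)).1
        rw [le_div_iff₀ hδ]
        nlinarith
      calc (∑ i ∈ T', edist (g (u (i + 1))) (g (u i)))
          ≤ T'.card • ENNReal.ofReal (2 * M) := Finset.sum_le_card_nsmul _ _ _ hterm
        _ = (T'.card : ENNReal) * ENNReal.ofReal (2 * M) := by rw [nsmul_eq_mul]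
        _ ≤ ENNReal.ofReal (8 * N / δ) * ENNReal.ofReal (2 * M) := by
            apply mul_le_mul_left
            rw [← ENNReal.ofReal_natCast]
            exact ENNReal.ofReal_le_ofReal hcard
    exact add_le_add hA hB
  have hne : (ENNReal.ofReal C + ENNReal.ofReal (8 * N / δ) * ENNReal.ofReal (2 * M)) ≠ ⊤ :=
    ENNReal.add_ne_top.2 ⟨ENNReal.ofReal_ne_top,
      ENNReal.mul_ne_top ENNReal.ofReal_ne_top ENNReal.ofReal_ne_top⟩
  exact ne_top_of_le_ne_top hne hbound

end BVSection
section Pointwise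

open Metric in
lemma pointwise_diff {n : ℕ} {g : ℝ → (Fin n → ℝ)} {I E : Set ℝ} (hI : I.OrdConnected)
    (hcont : ContinuousOn g I) (hE : E ⊆ I) {δ : ℝ} (hδ : 0 < δ) (φ : ℝ → ℝ)
    (hosc : ∀ p ∈ E, ∀ q ∈ E, p ≤ q → q - p ≤ δ / 4 → osc g (Icc p q) ≤ φ q - φ p)
    (x : ℝ)
    (hd : DifferentiableWithinAt ℝ g E x) (hφd : DifferentiableAt ℝ φ x)
    (hden : Tendsto (fun r => volume (E ∩ Metric.closedBall x r) / volume (Metric.closedBall x r))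
      (𝓝[>] (0:ℝ)) (𝓝 1)) :
    DifferentiableAt ℝ g x := by
  set L := fderivWithin ℝ g E x with hLdef
  have hL : HasFDerivWithinAt g L E x := hd.hasFDerivWithinAt
  set D := deriv φ x with hDdef
  have hD : HasDerivAt φ D x := hφd.hasDerivAt
  suffices H : HasFDerivAt g L x from H.differentiableAt
  refine HasFDerivAt.of_isLittleO ?_
  rw [Asymptotics.isLittleO_iff]
  intro c hc
  obtain ⟨k, hk0, hk⟩ : ∃ k : ℝ, 0 < k ∧ k = 10 * |D| + 5 * ‖L‖ + 7 :=
    ⟨10 * |D| + 5 * ‖L‖ + 7, by positivity, rfl⟩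
  obtain ⟨ε, hε0, hε5, hεk⟩ : ∃ ε : ℝ, 0 < ε ∧ ε ≤ 1/5 ∧ ε * k ≤ c := by
    refine ⟨min (1/5) (c / k), lt_min (by norm_num) (div_pos hc hk0), min_le_left _ _, ?_⟩
    have h1 := mul_le_mul_of_nonneg_right (min_le_right (1/5 : ℝ) (c / k)) hk0.le
    rw [div_mul_cancel₀ c (ne_of_gt hk0)] at h1
    exact h1
  -- within-E estimate
  have h3 := Asymptotics.IsLittleO.def hL.isLittleO hε0
  rw [eventually_nhdsWithin_iff, Metric.eventually_nhds_iff] at h3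
  obtain ⟨r3, hr3, H3⟩ := h3
  -- φ estimate
  have h4 := Asymptotics.IsLittleO.def (hasDerivAt_iff_isLittleO.1 hD) hε0
  rw [Metric.eventually_nhds_iff] at h4
  obtain ⟨r4, hr4, H4⟩ := h4
  -- density estimate
  have hofε : ENNReal.ofReal ε ≠ 0 := by
    simp only [ne_eq, ENNReal.ofReal_eq_zero, not_le]
    exact hε0
  have hlt : (1 : ℝ≥0∞) - ENNReal.ofReal ε < 1 :=
    ENNReal.sub_lt_self ENNReal.one_ne_top one_ne_zero hofε
  have h2 := hden.eventually (lt_mem_nhds hlt)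
  rw [eventually_nhdsWithin_iff, Metric.eventually_nhds_iff] at h2
  obtain ⟨r2, hr2, H2⟩ := h2
  -- the gap claim : any long enough subinterval near x meets E
  have GAP : ∀ r : ℝ, 0 < r → r < r2 → ∀ s t : ℝ, x - r ≤ s → s ≤ t → t ≤ x + r →
      ε * (2 * r) ≤ t - s → (E ∩ Icc s t).Nonempty := by
    intro r hr hrr2 s t hs hst ht hlen
    by_contra hcontra
    rw [Set.not_nonempty_iff_eq_empty] at hcontra
    have hB : volume (Metric.closedBall x r) = ENNReal.ofReal (2 * r) :=
      Real.volume_closedBall _ _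
    have hdless : dist r 0 < r2 := by
      rw [Real.dist_eq, sub_zero, abs_of_pos hr]; exact hrr2
    have hdens := H2 hdless (Set.mem_Ioi.2 hr)
    have hmul : (1 - ENNReal.ofReal ε) * volume (Metric.closedBall x r)
        < volume (E ∩ Metric.closedBall x r) := ENNReal.mul_lt_of_lt_div hdens
    have hsub : E ∩ Metric.closedBall x r ⊆ Metric.closedBall x r \ Ioo s t := by
      rintro z ⟨hzE, hzB⟩
      refine ⟨hzB, fun hzI => ?_⟩
      have : z ∈ E ∩ Icc s t := ⟨hzE, ⟨le_of_lt hzI.1, le_of_lt hzI.2⟩⟩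
      rw [hcontra] at this
      exact this
    have hIoosub : Ioo s t ⊆ Metric.closedBall x r := by
      rw [Real.closedBall_eq_Icc]
      exact fun z hz => ⟨by linarith [hz.1], by linarith [hz.2]⟩
    have hdiff : volume (Metric.closedBall x r \ Ioo s t)
        = ENNReal.ofReal (2 * r) - ENNReal.ofReal (t - s) := by
      rw [measure_diff hIoosub measurableSet_Ioo.nullMeasurableSet
        (by rw [Real.volume_Ioo]; exact ENNReal.ofReal_ne_top), Real.volume_Ioo, hB]
    have hchain : (1 - ENNReal.ofReal ε) * ENNReal.ofReal (2 * r)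
        < ENNReal.ofReal (2 * r) - ENNReal.ofReal (t - s) := by
      calc (1 - ENNReal.ofReal ε) * ENNReal.ofReal (2 * r)
          = (1 - ENNReal.ofReal ε) * volume (Metric.closedBall x r) := by rw [hB]
        _ < volume (E ∩ Metric.closedBall x r) := hmul
        _ ≤ volume (Metric.closedBall x r \ Ioo s t) := measure_mono hsub
        _ = _ := hdiff
    have hadd : (1 - ENNReal.ofReal ε) * ENNReal.ofReal (2 * r) + ENNReal.ofReal (t - s)
        < ENNReal.ofReal (2 * r) := lt_tsub_iff_right.1 hchain
    have hε1 : ENNReal.ofReal ε ≤ 1 := by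
      rw [ENNReal.ofReal_le_one]
      linarith
    have hsplitB : ENNReal.ofReal (2 * r)
        = (1 - ENNReal.ofReal ε) * ENNReal.ofReal (2 * r)
          + ENNReal.ofReal ε * ENNReal.ofReal (2 * r) := by
      rw [← add_mul, tsub_add_cancel_of_le hε1, one_mul]
    have hadd2 : (1 - ENNReal.ofReal ε) * ENNReal.ofReal (2 * r) + ENNReal.ofReal (t - s)
        < (1 - ENNReal.ofReal ε) * ENNReal.ofReal (2 * r)
          + ENNReal.ofReal ε * ENNReal.ofReal (2 * r) := lt_of_lt_of_le hadd (le_of_eq hsplitB)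
    have hfin : (1 - ENNReal.ofReal ε) * ENNReal.ofReal (2 * r) ≠ ⊤ :=
      ENNReal.mul_ne_top (by
        exact ne_top_of_le_ne_top ENNReal.one_ne_top tsub_le_self) ENNReal.ofReal_ne_top
    have hfinal : ENNReal.ofReal (t - s) < ENNReal.ofReal ε * ENNReal.ofReal (2 * r) :=
      (ENNReal.add_lt_add_iff_left hfin).1 hadd2
    rw [← ENNReal.ofReal_mul hε0.le] at hfinal
    have : t - s < ε * (2 * r) := by
      have h2r : 0 < ε * (2 * r) := by positivity
      exact (ENNReal.ofReal_lt_ofReal_iff h2r).1 hfinal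
    linarith
  -- choose the final radius
  obtain ⟨ρ, hρ0, hρ2, hρ3, hρ4, hρδ⟩ : ∃ ρ : ℝ, 0 < ρ ∧ ρ ≤ r2 / 4 ∧ ρ ≤ r3 / 4
      ∧ ρ ≤ r4 / 4 ∧ ρ ≤ δ / 32 :=
    ⟨min (min (r2 / 4) (r3 / 4)) (min (r4 / 4) (δ / 32)),
      lt_min (lt_min (by linarith) (by linarith)) (lt_min (by linarith) (by linarith)),
      le_trans (min_le_left _ _) (min_le_left _ _),
      le_trans (min_le_left _ _) (min_le_right _ _),
      le_trans (min_le_right _ _) (min_le_left _ _),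
      le_trans (min_le_right _ _) (min_le_right _ _)⟩
  rw [Metric.eventually_nhds_iff]
  refine ⟨ρ, hρ0, fun y hy => ?_⟩
  rcases eq_or_ne y x with rfl | hyx
  · simp
  · set h : ℝ := |y - x| with hh
    have hh0 : 0 < h := abs_pos.2 (sub_ne_zero.2 hyx)
    have hyd : h < ρ := by rwa [Real.dist_eq] at hy
    have hyu : y - x ≤ h := le_abs_self _
    have hyl : -(h) ≤ y - x := neg_abs_le _
    -- find u and v in E close to y on both sides
    have h2h : (0:ℝ) < 2 * h := by linarith
    have h2hr2 : 2 * h < r2 := by linarith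
    have hεh : ε * (2 * (2 * h)) = 4 * ε * h := by ring
    have h4εh0 : 0 ≤ 4 * ε * h := by positivity
    have h4εh5 : 4 * ε * h ≤ h := by
      have := mul_le_mul_of_nonneg_right hε5 hh0.le
      linarith
    have hu := GAP (2 * h) h2h h2hr2 (y - 4 * ε * h) y
      (by linarith) (by linarith) (by linarith) (by linarith [hεh])
    obtain ⟨u, huE, hu1, hu2⟩ := hu
    have hv := GAP (2 * h) h2h h2hr2 y (y + 4 * ε * h)
      (by linarith) (by linarith) (by linarith) (by linarith [hεh])
    obtain ⟨v, hvE, hv1, hv2⟩ := hv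
    have huv : u ≤ v := hu2.trans hv1
    have hlenuv : v - u ≤ δ / 4 := by linarith
    have hux_low : x - 2 * h ≤ u := by linarith
    have hux_high : u ≤ x + h := by linarith
    have hvx_high : v ≤ x + 2 * h := by linarith
    have huabs : |u - x| ≤ 2 * h := abs_le.2 ⟨by linarith, by linarith⟩
    have hvabs : |v - x| ≤ 2 * h := abs_le.2 ⟨by linarith, by linarith⟩
    have huabs2 := huabs
    have hvabs2 := hvabs
    -- oscillation control
    have hIccI : Icc u v ⊆ I := hI.out (hE huE) (hE hvE)
    have hgIcc : ContinuousOn g (Icc u v) := hcont.mono hIccI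
    have hyIcc : y ∈ Icc u v := ⟨hu2, hv1⟩
    have huIcc : u ∈ Icc u v := ⟨le_refl u, huv⟩
    have hgyu : ‖g y - g u‖ ≤ osc g (Icc u v) := norm_sub_le_osc hgIcc hyIcc huIcc
    have hoscuv : osc g (Icc u v) ≤ φ v - φ u := hosc u huE v hvE huv hlenuv
    -- φ increments
    have hφu := H4 (show dist u x < r4 by rw [Real.dist_eq]; linarith)
    have hφv := H4 (show dist v x < r4 by rw [Real.dist_eq]; linarith)
    rw [Real.norm_eq_abs, Real.norm_eq_abs] at hφu hφv
    have hφu1 : |φ u - φ x - (u - x) * D| ≤ ε * |u - x| := by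
      simpa [smul_eq_mul] using hφu
    have hφv1 : |φ v - φ x - (v - x) * D| ≤ ε * |v - x| := by
      simpa [smul_eq_mul] using hφv
    have hDvu : (v - u) * D ≤ |D| * (8 * ε * h) := by
      have h1 : v - u ≤ 8 * ε * h := by linarith
      have h2 : (v - u) * D ≤ (v - u) * |D| :=
        mul_le_mul_of_nonneg_left (le_abs_self D) (sub_nonneg.2 huv)
      have h3 : (v - u) * |D| ≤ (8 * ε * h) * |D| :=
        mul_le_mul_of_nonneg_right h1 (abs_nonneg D)
      have h4 : (8 * ε * h) * |D| = |D| * (8 * ε * h) := mul_comm _ _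
      linarith
    have hφbound : φ v - φ u ≤ 8 * |D| * ε * h + 4 * ε * h := by
      have e1 : φ v - φ x - (v - x) * D ≤ ε * |v - x| := (abs_le.1 hφv1).2
      have e2 : -(ε * |u - x|) ≤ φ u - φ x - (u - x) * D := (abs_le.1 hφu1).1
      have e3 : ε * |v - x| ≤ ε * (2 * h) := mul_le_mul_of_nonneg_left hvabs hε0.le
      have e4 : ε * |u - x| ≤ ε * (2 * h) := mul_le_mul_of_nonneg_left huabs hε0.le
      have eD : (v - x) * D - (u - x) * D = (v - u) * D := by ring
      have eD2 : |D| * (8 * ε * h) = 8 * |D| * ε * h := by ring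
      linarith
    -- within-E estimate at u
    have hus := H3 (show dist u x < r3 by rw [Real.dist_eq]; linarith) huE
    rw [Real.norm_eq_abs (u - x)] at hus
    have hus' : ‖g u - g x - L (u - x)‖ ≤ ε * (2 * h) := by
      calc ‖g u - g x - L (u - x)‖ ≤ ε * |u - x| := hus
        _ ≤ ε * (2 * h) := mul_le_mul_of_nonneg_left huabs hε0.le
    -- linear map terms
    have hLyu : ‖L (y - u)‖ ≤ ‖L‖ * (4 * ε * h) := by
      calc ‖L (y - u)‖ ≤ ‖L‖ * ‖y - u‖ := L.le_opNorm _
        _ ≤ ‖L‖ * (4 * ε * h) := by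
            have h1 : ‖y - u‖ = |y - u| := rfl
            have h2 : 0 ≤ y - u := by linarith [hu2]
            have h3 : y - u ≤ 4 * ε * h := by linarith [hu1]
            have h4 : |y - u| ≤ 4 * ε * h := by rw [abs_of_nonneg h2]; exact h3
            rw [h1]
            exact mul_le_mul_of_nonneg_left h4 (norm_nonneg L)
    -- combine
    have hdecomp : g y - g x - L (y - x)
        = (g y - g u) + (g u - g x - L (u - x)) - L (y - u) := by
      have : L (y - x) = L (u - x) + L (y - u) := by
        rw [← map_add]
        congr 1
        ring
      rw [this]
      abel
    have hnorm : ‖g y - g x - L (y - x)‖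
        ≤ ‖g y - g u‖ + ‖g u - g x - L (u - x)‖ + ‖L (y - u)‖ := by
      rw [hdecomp]
      calc ‖(g y - g u) + (g u - g x - L (u - x)) - L (y - u)‖
          ≤ ‖(g y - g u) + (g u - g x - L (u - x))‖ + ‖L (y - u)‖ := norm_sub_le _ _
        _ ≤ ‖g y - g u‖ + ‖g u - g x - L (u - x)‖ + ‖L (y - u)‖ := by
            have := norm_add_le (g y - g u) (g u - g x - L (u - x))
            linarith
    have htotal : ‖g y - g x - L (y - x)‖ ≤ ε * k * h := by
      have hLnn : (0:ℝ) ≤ ‖L‖ := norm_nonneg _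
      have hDnn : (0:ℝ) ≤ |D| := abs_nonneg _
      calc ‖g y - g x - L (y - x)‖
          ≤ ‖g y - g u‖ + ‖g u - g x - L (u - x)‖ + ‖L (y - u)‖ := hnorm
        _ ≤ (8 * |D| * ε * h + 4 * ε * h) + ε * (2 * h) + ‖L‖ * (4 * ε * h) := by
            have t1 : ‖g y - g u‖ ≤ 8 * |D| * ε * h + 4 * ε * h :=
              le_trans hgyu (le_trans hoscuv hφbound)
            linarith
        _ ≤ ε * k * h := by
            rw [hk]
            have key : ∀ dd ll e hh : ℝ, 0 ≤ dd → 0 ≤ ll → 0 ≤ e → 0 ≤ hh →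
                (8 * dd * e * hh + 4 * e * hh) + e * (2 * hh) + ll * (4 * e * hh)
                  ≤ e * (10 * dd + 5 * ll + 7) * hh := by
              intro dd ll e hh h1 h2 h3 h4
              have hid : e * (10 * dd + 5 * ll + 7) * hh
                  - ((8 * dd * e * hh + 4 * e * hh) + e * (2 * hh) + ll * (4 * e * hh))
                  = e * hh * (2 * dd + ll + 1) := by ring
              have hnn : 0 ≤ e * hh * (2 * dd + ll + 1) :=
                mul_nonneg (mul_nonneg h3 h4) (by linarith)
              linarith
            exact key |D| ‖L‖ ε h hDnn hLnn hε0.le hh0.le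
    have hcy : ε * k * h ≤ c * ‖y - x‖ := by
      have hnyx : ‖y - x‖ = h := by rw [hh]; rfl
      rw [hnyx]
      exact mul_le_mul_of_nonneg_right hεk hh0.le
    linarith
end Pointwise
section Main

lemma ACStarOn.mono' {n : ℕ} {g : ℝ → (Fin n → ℝ)} {S S' : Set ℝ}
    (h : ACStarOn g S) (hsub : S' ⊆ S) : ACStarOn g S' := by
  intro ε hε
  obtain ⟨δ, hδ, hδ'⟩ := h ε hε
  exact ⟨δ, hδ, fun m a b hfam hno hlen => hδ' m a b
    (fun i => ⟨(hfam i).1, hsub (hfam i).2.1, hsub (hfam i).2.2⟩) hno hlen⟩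

lemma main_aux {n : ℕ} {g : ℝ → (Fin n → ℝ)} {I : Set ℝ} (hI : I.OrdConnected)
    (hcont : ContinuousOn g I) (E : Set ℝ) (hE : E ⊆ I) (N : ℕ)
    (hEN : E ⊆ Icc (-(N : ℝ)) N) (hAC : ACStarOn g E) :
    volume ({t | ¬ DifferentiableAt ℝ g t} ∩ E) = 0 := by
  classical
  rcases E.eq_empty_or_nonempty with rfl | hne
  · simp
  obtain ⟨δ, hδ, hACδ⟩ := hAC 1 one_pos
  have hδ8 : (0:ℝ) < δ / 8 := by linarith
  set C : ℝ := (⌈16 * (N : ℝ) / δ⌉₊ + 1 : ℝ) with hC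
  have hCbound : ∀ t : ℝ, ∀ x ∈ oscA g E δ t, x ≤ C := by
    rintro t x ⟨m, a, b, hfam, hno, rfl⟩
    exact gridBound N hEN hδ hACδ a b
      (fun i => ⟨(hfam i).1, (hfam i).2.1, (hfam i).2.2.1, (hfam i).2.2.2.2⟩) hno
  have hφm : Monotone (Phi g E δ) := Phi_mono hCbound
  have hφ0 : ∀ t, 0 ≤ Phi g E δ t := Phi_nonneg hCbound
  have hφC : ∀ t, Phi g E δ t ≤ C := Phi_le hCbound
  have hosc : ∀ p ∈ E, ∀ q ∈ E, p ≤ q → q - p ≤ δ / 4 →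
      osc g (Icc p q) ≤ Phi g E δ q - Phi g E δ p :=
    fun p hp q hq hpq hlen => osc_le_Phi_sub hCbound hp hq hpq hlen
  have hshort : ∀ p ∈ E, ∀ q ∈ E, p ≤ q → q - p ≤ δ / 4 →
      ‖g q - g p‖ ≤ Phi g E δ q - Phi g E δ p := by
    intro p hp q hq hpq hlen
    have hIccI : Icc p q ⊆ I := hI.out (hE hp) (hE hq)
    have h1 : ‖g q - g p‖ ≤ osc g (Icc p q) :=
      norm_sub_le_osc (hcont.mono hIccI) ⟨hpq, le_refl q⟩ ⟨le_refl p, hpq⟩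
    exact h1.trans (hosc p hp q hq hpq hlen)
  -- a uniform bound for `g` on `E`
  obtain ⟨M, hM⟩ : ∃ M : ℝ, ∀ p ∈ E, ‖g p‖ ≤ M := by
    set K := ⌈16 * (N:ℝ) / δ⌉₊ with hK
    set cell : ℕ → Set ℝ := fun k => Icc ((k:ℝ) * (δ/8) - N) (((k:ℝ) + 1) * (δ/8) - N)
      with hcell
    set R : ℕ → ℝ := fun k => if h : (E ∩ cell k).Nonempty then h.choose else hne.choose
      with hR
    refine ⟨(Finset.range (K+1)).sup' ⟨0, Finset.mem_range.2 (Nat.succ_pos K)⟩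
      (fun k => ‖g (R k)‖) + C, ?_⟩
    intro p hp
    set k := ⌊(p + N) / (δ/8)⌋₊ with hkdef
    have hp0 : 0 ≤ p + N := by have := (hEN hp).1; linarith
    have hkK : k < K + 1 := by
      have h1 : (p + N) / (δ/8) ≤ 16 * (N : ℝ) / δ := by
        have := (hEN hp).2
        rw [div_le_div_iff₀ hδ8 hδ]
        nlinarith
      have h2 : k ≤ K := by
        calc k ≤ ⌊16 * (N : ℝ) / δ⌋₊ := Nat.floor_le_floor h1
          _ ≤ K := Nat.floor_le_ceil _
      exact Nat.lt_succ_of_le h2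
    have hpcell : p ∈ cell k := by
      have hlow : (k : ℝ) ≤ (p + N) / (δ/8) := Nat.floor_le (div_nonneg hp0 hδ8.le)
      have hhigh : (p + N) / (δ/8) < (k : ℝ) + 1 := Nat.lt_floor_add_one _
      have hlow' : (k : ℝ) * (δ/8) ≤ p + N := by rwa [← le_div_iff₀ hδ8]
      have hhigh' : p + N < ((k : ℝ) + 1) * (δ/8) := by rwa [← div_lt_iff₀ hδ8]
      exact ⟨by linarith, by linarith⟩
    have hne2 : (E ∩ cell k).Nonempty := ⟨p, hp, hpcell⟩
    have hRk : R k ∈ E ∩ cell k := by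
      simp only [hR, dif_pos hne2]
      exact hne2.choose_spec
    have hgRle : ‖g (R k)‖ ≤ (Finset.range (K+1)).sup'
        ⟨0, Finset.mem_range.2 (Nat.succ_pos K)⟩ (fun k => ‖g (R k)‖) :=
      Finset.le_sup' (f := fun k => ‖g (R k)‖) (Finset.mem_range.2 hkK)
    have hnear : ‖g p - g (R k)‖ ≤ C := by
      have hwidth : |p - R k| ≤ δ / 8 := by
        have h1 := hRk.2.1
        have h2 := hRk.2.2
        have h3 := hpcell.1
        have h4 := hpcell.2
        rw [abs_le]
        constructor <;> nlinarith
      rcases le_total p (R k) with hle | hle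
      · have := hshort p hp (R k) hRk.1 hle (by rw [abs_le] at hwidth; linarith [hwidth.1])
        rw [norm_sub_rev]
        have := hφC (R k)
        have := hφ0 p
        linarith [hshort p hp (R k) hRk.1 hle
          (by rw [abs_le] at hwidth; linarith [hwidth.1])]
      · have h5 : p - R k ≤ δ / 4 := by
          rw [abs_le] at hwidth
          linarith [hwidth.2]
        have := hshort (R k) hRk.1 p hp hle h5
        have := hφC p
        have := hφ0 (R k)
        linarith
    calc ‖g p‖ ≤ ‖g (R k)‖ + ‖g p - g (R k)‖ := by
          have := norm_add_le (g (R k)) (g p - g (R k))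
          simpa using this
      _ ≤ _ := by linarith
  have hBV : BoundedVariationOn g E :=
    evar_bounded N hEN hδ (Phi g E δ) hφm hφ0 hφC hshort hM
  have hLBV : LocallyBoundedVariationOn g E := hBV.locallyBoundedVariationOn
  have h1 : ∀ᵐ x, x ∈ E → DifferentiableWithinAt ℝ g E x :=
    hLBV.ae_differentiableWithinAt_of_mem
  have h2 : ∀ᵐ x, DifferentiableAt ℝ (Phi g E δ) x := hφm.ae_differentiableAt
  have h3 := Besicovitch.ae_tendsto_measure_inter_div volume E
  have hall := (ae_restrict_of_ae (h1.and h2)).and h3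
  have hPnull := ae_iff.1 hall
  set B := toMeasurable (volume.restrict E)
    {x | ¬ (((x ∈ E → DifferentiableWithinAt ℝ g E x) ∧ DifferentiableAt ℝ (Phi g E δ) x) ∧
      Tendsto (fun r => volume (E ∩ Metric.closedBall x r) / volume (Metric.closedBall x r))
        (𝓝[>] (0:ℝ)) (𝓝 1))} with hBdef
  have hBm : MeasurableSet B := measurableSet_toMeasurable _ _
  have hBnull : volume (B ∩ E) = 0 := by
    have hmB : volume.restrict E B = 0 := by
      rw [hBdef, measure_toMeasurable]
      exact hPnull
    rwa [Measure.restrict_apply hBm] at hmB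
  apply measure_mono_null _ hBnull
  rintro x ⟨hxd, hxE⟩
  refine ⟨?_, hxE⟩
  apply subset_toMeasurable
  simp only [mem_setOf_eq]
  intro hPx
  exact hxd (pointwise_diff hI hcont hE hδ (Phi g E δ) hosc x (hPx.1.1 hxE) hPx.1.2 hPx.2)

end Main

theorem stmt_11 {n : ℕ} (g : ℝ → (Fin n → ℝ)) (I : Set ℝ)
    (hI : I.OrdConnected) (hIne : MeasureTheory.volume I ≠ 0)
    (hacg : ACGStarOn g I) :
    ∀ᵐ t ∂(MeasureTheory.volume.restrict I), DifferentiableAt ℝ g t := by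
  obtain ⟨hcont, f, hIeq, hf⟩ := hacg
  have hImeas : MeasurableSet I := hI.measurableSet
  rw [ae_iff, Measure.restrict_apply' hImeas]
  have hcover : {t | ¬ DifferentiableAt ℝ g t} ∩ I ⊆
      ⋃ (j : ℕ), ⋃ (N : ℕ), ({t | ¬ DifferentiableAt ℝ g t} ∩ (f j ∩ Icc (-(N:ℝ)) N)) := by
    rintro t ⟨htd, htI⟩
    rw [hIeq] at htI
    rw [mem_iUnion] at htI
    obtain ⟨j, htj⟩ := htI
    refine mem_iUnion.2 ⟨j, mem_iUnion.2 ⟨⌈|t|⌉₊, htd, htj, ?_⟩⟩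
    have h1 : |t| ≤ (⌈|t|⌉₊ : ℝ) := Nat.le_ceil _
    have h2 := le_abs_self t
    have h3 := neg_abs_le t
    exact ⟨by linarith, by linarith⟩
  apply measure_mono_null hcover
  apply measure_iUnion_null
  intro j
  apply measure_iUnion_null
  intro N
  apply main_aux hI hcont (f j ∩ Icc (-(N:ℝ)) N) ?_ N inter_subset_right
    ((hf j).mono' inter_subset_left)
  intro x hx
  rw [hIeq]
  exact mem_iUnion.2 ⟨j, hx.1⟩
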